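/- The Pythagorean triple system PYTH is linear: any two distinct Pythagorean triples intersect in at most one point. That is, if {a,b,c} and {a',b',c'} are sets of distinct positive integers with a² + b² = c² and a'² + b'² = c'², and the two sets share at least two elements, then they are equal. -/

import Mathlib

lemma nsq {u v c : ℕ} (h : Nat.Coprime u v) (heq : u * v = c ^ 2) : ∃ d, u = d ^ 2 :=
  exists_eq_pow_of_mul_eq_pow (by rw [Nat.isUnit_iff]; exact h) heq

lemma parity_sq (n : ℕ) : 2 ∣ n ^ 2 + n := by
  obtain ⟨x, hx⟩ := Nat.even_mul_succ_self n
  have h : n ^ 2 + n = n * (n + 1) := by ring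
  exact ⟨x, by omega⟩

lemma odd_dvd {d k : ℕ} (hk : Odd k) (h : d ∣ k) : Odd d := by
  rcases Nat.even_or_odd d with ⟨x, hx⟩ | ho
  · exfalso
    obtain ⟨y, hy⟩ := h
    obtain ⟨z, hz⟩ := hk
    have h4 : (x + x) * y = 2 * (x * y) := by ring
    subst hx hy; omega
  · exact ho

lemma odd_coprime_two {d : ℕ} (hd : Odd d) : Nat.Coprime d 2 := by
  obtain ⟨x, hx⟩ := hd
  rcases (Nat.dvd_prime Nat.prime_two).mp (Nat.gcd_dvd_right d 2) with h | h
  · exact h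
  · exfalso
    have h2 : 2 ∣ d := h ▸ Nat.gcd_dvd_left d 2
    obtain ⟨y, hy⟩ := h2
    omega

lemma odd_of_sq {s : ℕ} (h : Odd (s ^ 2)) : Odd s := by
  rcases Nat.even_or_odd s with ⟨x, hx⟩ | ho
  · exfalso
    obtain ⟨z, hz⟩ := h
    have h4 : (x + x) ^ 2 = 4 * x ^ 2 := by ring
    subst hx; omega
  · exact ho

lemma pos_of_sq {u e : ℕ} (hu : 0 < u) (he : u = e ^ 2) : 0 < e := by
  rcases Nat.eq_zero_or_pos e with h | h
  · subst h; simp at he; omega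
  · exact h

lemma fermat_diff : ∀ a b c : ℕ, 0 < b → 0 < c → a ^ 4 ≠ b ^ 4 + c ^ 2 := by
  intro a
  induction a using Nat.strong_induction_on with
  | _ a IH =>
  intro b c hb hc heq
  have hba : b < a := by
    have h0 : 0 < c ^ 2 := by positivity
    have : b ^ 4 < a ^ 4 := by omega
    exact lt_of_pow_lt_pow_left₀ 4 (Nat.zero_le a) this
  have ha : 0 < a := lt_of_le_of_lt (Nat.zero_le b) hba
  by_cases hg : Nat.gcd a b = 1
  · -- coprime case
    have hco : Nat.Coprime a b := hg
    rcases Nat.even_or_odd a with haev | haod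
    · -- a even: contradiction mod 8
      obtain ⟨m, hm⟩ := haev
      have hbodd : Odd b := by
        rcases Nat.even_or_odd b with ⟨k, hk⟩ | h; swap; · exact h
        exfalso
        have : 2 ∣ Nat.gcd a b := Nat.dvd_gcd ⟨m, by omega⟩ ⟨k, by omega⟩
        omega
      obtain ⟨n, hn⟩ : Odd (b ^ 2) := hbodd.pow
      have hE : 16 * m ^ 4 = 4 * n ^ 2 + 4 * n + 1 + c ^ 2 := by
        have h1 : a ^ 4 = 16 * m ^ 4 := by subst hm; ring
        have h2 : b ^ 4 = 4 * n ^ 2 + 4 * n + 1 := by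
          have h3 : b ^ 4 = (b ^ 2) ^ 2 := by ring
          rw [h3, hn]; ring
        omega
      have hcodd : Odd c := by
        rcases Nat.even_or_odd c with ⟨j, hj⟩ | h; swap; · exact h
        exfalso
        have h3 : c ^ 2 = 4 * j ^ 2 := by subst hj; ring
        rw [h3] at hE
        obtain ⟨x, hx⟩ := parity_sq n
        generalize m ^ 4 = M at hE
        generalize n ^ 2 = N at hE hx
        generalize j ^ 2 = J at hE
        omega
      obtain ⟨j, hj⟩ := hcodd
      have h3 : c ^ 2 = 4 * j ^ 2 + 4 * j + 1 := by subst hj; ring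
      rw [h3] at hE
      obtain ⟨x, hx⟩ := parity_sq n
      obtain ⟨y, hy⟩ := parity_sq j
      generalize m ^ 4 = M at hE
      generalize n ^ 2 = N at hE hx
      generalize j ^ 2 = J at hE hy
      omega
    · -- a odd
      have hab2 : b ^ 2 < a ^ 2 := Nat.pow_lt_pow_left hba (by norm_num)
      have hcosq : Nat.Coprime (a ^ 2) (b ^ 2) := Nat.Coprime.pow 2 2 hco
      rcases Nat.even_or_odd b with hbev | hbodd
      · -- Case B : b even, a odd
        obtain ⟨b₁, hb₁⟩ := hbev
        have hb₁' : b = 2 * b₁ := by omega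
        have hb₁pos : 0 < b₁ := by omega
        -- the key descent subroutine
        have key : ∀ E O : ℕ, 0 < E → 0 < O → Even E → Nat.Coprime E O →
            E * O = 2 * b₁ ^ 2 → E ^ 2 + O ^ 2 = a ^ 2 → False := by
          intro E O hE hO hEev hEO hprod hsum
          obtain ⟨E₁, hE₁⟩ := hEev
          have hE₁' : E = 2 * E₁ := by omega
          have hE₁pos : 0 < E₁ := by omega
          have hprod₁ : E₁ * O = b₁ ^ 2 := by
            have h1 : E * O = 2 * (E₁ * O) := by rw [hE₁']; ring
            omega
          have hcoE₁O : Nat.Coprime E₁ O := by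
            have h1 : Nat.gcd E₁ O ∣ E := dvd_trans (Nat.gcd_dvd_left E₁ O) ⟨2, by omega⟩
            have h2 := Nat.gcd_dvd_right E₁ O
            have h3 := Nat.dvd_gcd h1 h2
            rw [hEO] at h3
            exact Nat.dvd_one.mp h3
          obtain ⟨w, hw⟩ := nsq hcoE₁O hprod₁
          obtain ⟨z, hz⟩ := nsq hcoE₁O.symm (by rw [mul_comm]; exact hprod₁)
          have hwpos : 0 < w := pos_of_sq hE₁pos hw
          have hzpos : 0 < z := pos_of_sq hO hz
          have hsum' : a ^ 2 = 4 * w ^ 4 + z ^ 4 := by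
            have h1 : E ^ 2 = 4 * w ^ 4 := by rw [hE₁', hw]; ring
            have h2 : O ^ 2 = z ^ 4 := by rw [hz]; ring
            omega
          have hcoaE₁ : Nat.Coprime a E₁ := by
            have hdE : Nat.gcd a E₁ ∣ E := dvd_trans (Nat.gcd_dvd_right _ _) ⟨2, by omega⟩
            have h1 : Nat.gcd a E₁ ∣ O := by
              have hda : Nat.gcd a E₁ ∣ a := Nat.gcd_dvd_left _ _
              have hsq : (Nat.gcd a E₁) ^ 2 ∣ O ^ 2 := by
                have hOsq : O ^ 2 = a ^ 2 - E ^ 2 := by omega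
                rw [hOsq]
                exact Nat.dvd_sub (pow_dvd_pow_of_dvd hda 2) (pow_dvd_pow_of_dvd hdE 2)
              exact (Nat.pow_dvd_pow_iff (by norm_num)).mp hsq
            have h3 := Nat.dvd_gcd hdE h1
            rw [hEO] at h3
            exact Nat.dvd_one.mp h3
          have h2wa : 2 * w ^ 2 < a := by
            have e : (2 * w ^ 2) ^ 2 = 4 * w ^ 4 := by ring
            have h0 : 0 < z ^ 4 := by positivity
            have h1 : (2 * w ^ 2) ^ 2 < a ^ 2 := by omega
            exact lt_of_pow_lt_pow_left₀ 2 (Nat.zero_le a) h1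
          obtain ⟨m, hmdef⟩ : ∃ m, a = 2 * w ^ 2 + m := ⟨a - 2 * w ^ 2, by omega⟩
          have hmpos : 0 < m := by omega
          have hmodd : Odd m := by
            obtain ⟨x, hx⟩ := haod
            refine ⟨x - w ^ 2, ?_⟩
            have : w ^ 2 ≤ x := by omega
            omega
          have hz4 : z ^ 4 = m * (m + 4 * w ^ 2) := by
            have h1 : a ^ 2 = m * (m + 4 * w ^ 2) + 4 * w ^ 4 := by rw [hmdef]; ring
            omega
          have hcomR : Nat.Coprime m (m + 4 * w ^ 2) := by
            have hd1 : Nat.gcd m (m + 4 * w ^ 2) ∣ m := Nat.gcd_dvd_left _ _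
            have hd2 : Nat.gcd m (m + 4 * w ^ 2) ∣ 4 * w ^ 2 :=
              (Nat.dvd_add_right hd1).mp (Nat.gcd_dvd_right _ _)
            have hdodd : Odd (Nat.gcd m (m + 4 * w ^ 2)) := odd_dvd hmodd hd1
            have hdw : Nat.gcd m (m + 4 * w ^ 2) ∣ w ^ 2 := by
              have hco4 : Nat.Coprime (Nat.gcd m (m + 4 * w ^ 2)) 4 := by
                have h5 := (odd_coprime_two hdodd).pow_right 2
                simpa using h5
              exact hco4.dvd_of_dvd_mul_left hd2
            have hda : Nat.gcd m (m + 4 * w ^ 2) ∣ a := by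
              rw [hmdef]
              exact Nat.dvd_add (Dvd.dvd.mul_left hdw 2) hd1
            have hdE₁ : Nat.gcd m (m + 4 * w ^ 2) ∣ E₁ := by
              rw [hw]; exact dvd_trans hdw ⟨1, by ring⟩
            have h3 := Nat.dvd_gcd hda hdE₁
            rw [hcoaE₁] at h3
            exact Nat.dvd_one.mp h3
          obtain ⟨e₃, he₃⟩ := nsq (c := z ^ 2) hcomR (by rw [← hz4]; ring)
          obtain ⟨f₃, hf₃⟩ := nsq (c := z ^ 2) hcomR.symm (by rw [mul_comm, ← hz4]; ring)
          have he₃pos : 0 < e₃ := pos_of_sq hmpos he₃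
          have hf₃gt : e₃ < f₃ := by
            have h0 : 0 < w ^ 2 := by positivity
            have h1 : e₃ ^ 2 < f₃ ^ 2 := by rw [← he₃, ← hf₃]; omega
            exact lt_of_pow_lt_pow_left₀ 2 (Nat.zero_le f₃) h1
          have he₃odd : Odd e₃ := odd_of_sq (he₃ ▸ hmodd)
          have hf₃odd : Odd f₃ := by
            refine odd_of_sq ?_
            rw [← hf₃]
            obtain ⟨x, hx⟩ := hmodd
            exact ⟨x + 2 * w ^ 2, by omega⟩
          obtain ⟨d₂, hd₂⟩ : ∃ d₂, f₃ = e₃ + 2 * d₂ := by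
            obtain ⟨x, hx⟩ := he₃odd; obtain ⟨y, hy⟩ := hf₃odd
            exact ⟨y - x, by omega⟩
          have hd₂pos : 0 < d₂ := by omega
          have hw2eq : (e₃ + d₂) * d₂ = w ^ 2 := by
            have h1 : f₃ ^ 2 = e₃ ^ 2 + 4 * ((e₃ + d₂) * d₂) := by rw [hd₂]; ring
            have h2 : m + 4 * w ^ 2 = f₃ ^ 2 := hf₃
            have h3 : m = e₃ ^ 2 := he₃
            omega
          have hcoe₃f₃ : Nat.Coprime e₃ f₃ := by
            have h5 := hcomR
            rw [hf₃, he₃] at h5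
            rw [← Nat.coprime_pow_left_iff (by norm_num : 0 < 2) e₃ f₃,
                ← Nat.coprime_pow_right_iff (by norm_num : 0 < 2)]
            exact h5
          have hcopq : Nat.Coprime (e₃ + d₂) d₂ := by
            have hd1 : Nat.gcd (e₃ + d₂) d₂ ∣ d₂ := Nat.gcd_dvd_right _ _
            have hd2 : Nat.gcd (e₃ + d₂) d₂ ∣ e₃ :=
              (Nat.dvd_add_iff_left hd1).mpr (Nat.gcd_dvd_left _ _)
            have hd3 : Nat.gcd (e₃ + d₂) d₂ ∣ f₃ := by
              rw [hd₂]
              exact Nat.dvd_add hd2 (Dvd.dvd.mul_left hd1 2)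
            have h3 := Nat.dvd_gcd hd2 hd3
            rw [hcoe₃f₃] at h3
            exact Nat.dvd_one.mp h3
          obtain ⟨r₁, hr₁⟩ := nsq hcopq hw2eq
          obtain ⟨s₁, hs₁⟩ := nsq hcopq.symm (by rw [mul_comm]; exact hw2eq)
          have hs₁pos : 0 < s₁ := pos_of_sq hd₂pos hs₁
          have hz2 : z ^ 2 = e₃ * f₃ := by
            have h1 : (z ^ 2) ^ 2 = (e₃ * f₃) ^ 2 := by
              have h0 : z ^ 4 = e₃ ^ 2 * f₃ ^ 2 := by rw [hz4, hf₃, he₃]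
              calc (z ^ 2) ^ 2 = z ^ 4 := by ring
                _ = e₃ ^ 2 * f₃ ^ 2 := h0
                _ = (e₃ * f₃) ^ 2 := by ring
            exact Nat.pow_left_injective (by norm_num) h1
          have hfinal : r₁ ^ 4 = s₁ ^ 4 + z ^ 2 := by
            have h1 : r₁ ^ 4 = (e₃ + d₂) ^ 2 := by rw [hr₁]; ring
            have h2 : s₁ ^ 4 = d₂ ^ 2 := by rw [hs₁]; ring
            have h3 : z ^ 2 = e₃ * (e₃ + 2 * d₂) := by rw [hz2, hd₂]
            have h4 : (e₃ + d₂) ^ 2 = d₂ ^ 2 + e₃ * (e₃ + 2 * d₂) := by ring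
            omega
          have hr₁a : r₁ < a := by
            have h1 : e₃ + d₂ ≤ (e₃ + d₂) * d₂ := Nat.le_mul_of_pos_right _ hd₂pos
            have h2 : r₁ ^ 2 ≤ w ^ 2 := by rw [← hr₁, ← hw2eq]; exact h1
            have h3 : w ^ 2 ≤ 2 * w ^ 2 := by omega
            have h4 : a ≤ a ^ 2 := Nat.le_self_pow (by norm_num) a
            have h5 : r₁ ^ 2 < a ^ 2 := by omega
            exact lt_of_pow_lt_pow_left₀ 2 (Nat.zero_le a) h5
          exact IH r₁ hr₁a s₁ z hs₁pos hzpos hfinal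
        -- now produce E, O
        obtain ⟨k, hk⟩ : ∃ k, a ^ 2 = b ^ 2 + k := ⟨a ^ 2 - b ^ 2, by omega⟩
        have hkpos : 0 < k := by omega
        have hkodd : Odd k := by
          obtain ⟨x, hx⟩ := haod
          have h1 : a ^ 2 = 4 * (x ^ 2 + x) + 1 := by subst hx; ring
          have h2 : b ^ 2 = 4 * b₁ ^ 2 := by rw [hb₁']; ring
          refine ⟨2 * (x ^ 2 + x) - 2 * b₁ ^ 2, ?_⟩
          omega
        have hcsq : c ^ 2 = k * (k + 2 * b ^ 2) := by
          have h4 : a ^ 4 = (b ^ 2 + k) ^ 2 := by rw [← hk]; ring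
          have h5 : (b ^ 2 + k) ^ 2 = b ^ 4 + k * (k + 2 * b ^ 2) := by ring
          omega
        have hcokQ : Nat.Coprime k (k + 2 * b ^ 2) := by
          have hd1 : Nat.gcd k (k + 2 * b ^ 2) ∣ k := Nat.gcd_dvd_left _ _
          have hd2 : Nat.gcd k (k + 2 * b ^ 2) ∣ 2 * b ^ 2 :=
            (Nat.dvd_add_right hd1).mp (Nat.gcd_dvd_right _ _)
          have hdodd : Odd (Nat.gcd k (k + 2 * b ^ 2)) := odd_dvd hkodd hd1
          have hdb : Nat.gcd k (k + 2 * b ^ 2) ∣ b ^ 2 :=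
            (odd_coprime_two hdodd).dvd_of_dvd_mul_left hd2
          have hda : Nat.gcd k (k + 2 * b ^ 2) ∣ a ^ 2 := by
            rw [hk]; exact Nat.dvd_add hdb hd1
          have h3 := Nat.dvd_gcd hda hdb
          rw [hcosq] at h3
          exact Nat.dvd_one.mp h3
        obtain ⟨s, hs⟩ := nsq hcokQ hcsq.symm
        obtain ⟨t, ht⟩ := nsq hcokQ.symm (by rw [mul_comm]; exact hcsq.symm)
        have hsodd : Odd s := odd_of_sq (hs ▸ hkodd)
        have htodd : Odd t := by
          refine odd_of_sq ?_
          rw [← ht]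
          obtain ⟨x, hx⟩ := hkodd
          exact ⟨x + b ^ 2, by omega⟩
        have hst : s < t := by
          have h0 : 0 < b ^ 2 := by positivity
          have h1 : s ^ 2 < t ^ 2 := by rw [← hs, ← ht]; omega
          exact lt_of_pow_lt_pow_left₀ 2 (Nat.zero_le t) h1
        obtain ⟨d, hd⟩ : ∃ d, t = s + 2 * d := by
          obtain ⟨x, hx⟩ := hsodd; obtain ⟨y, hy⟩ := htodd
          exact ⟨y - x, by omega⟩
        have hdpos : 0 < d := by omega
        have hprodb : 2 * ((s + d) * d) = b ^ 2 := by
          have e1 : (s + 2 * d) ^ 2 = s ^ 2 + 4 * ((s + d) * d) := by ring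
          have ht' : k + 2 * b ^ 2 = (s + 2 * d) ^ 2 := by rw [← hd]; exact ht
          have hs' : k = s ^ 2 := hs
          omega
        have hprodb₁ : (s + d) * d = 2 * b₁ ^ 2 := by
          have h2 : b ^ 2 = 4 * b₁ ^ 2 := by rw [hb₁']; ring
          omega
        have hsum : (s + d) ^ 2 + d ^ 2 = a ^ 2 := by
          have e2 : (s + d) ^ 2 + d ^ 2 = s ^ 2 + 2 * ((s + d) * d) := by ring
          have hs' : k = s ^ 2 := hs
          omega
        have hstco : Nat.Coprime s t := by
          have h5 := hcokQ
          rw [ht, hs] at h5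
          rw [← Nat.coprime_pow_left_iff (by norm_num : 0 < 2) s t,
              ← Nat.coprime_pow_right_iff (by norm_num : 0 < 2)]
          exact h5
        have hcopq : Nat.Coprime (s + d) d := by
          have hd1 : Nat.gcd (s + d) d ∣ d := Nat.gcd_dvd_right _ _
          have hd2 : Nat.gcd (s + d) d ∣ s :=
            (Nat.dvd_add_iff_left hd1).mpr (Nat.gcd_dvd_left _ _)
          have hd3 : Nat.gcd (s + d) d ∣ t := by
            rw [hd]; exact Nat.dvd_add hd2 (Dvd.dvd.mul_left hd1 2)
          have h3 := Nat.dvd_gcd hd2 hd3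
          rw [hstco] at h3
          exact Nat.dvd_one.mp h3
        rcases Nat.even_or_odd (s + d) with hpev | hpodd
        · exact key (s + d) d (by omega) hdpos hpev hcopq hprodb₁ hsum
        · have hdev : Even d := by
            rcases Nat.even_or_odd d with h | hdo
            · exact h
            · exfalso
              obtain ⟨x, hx⟩ := hpodd; obtain ⟨y, hy⟩ := hdo
              have : (s + d) * d = (2 * x + 1) * (2 * y + 1) := by rw [hx, hy]
              have h6 : (2 * x + 1) * (2 * y + 1) = 2 * (2 * x * y + x + y) + 1 := by ring
              omega
          exact key d (s + d) hdpos (by omega) hdev hcopq.symm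
            (by rw [mul_comm]; exact hprodb₁) (by omega)
      · -- Case A : both odd
        have hpar : (a ^ 2 - b ^ 2) % 2 = 0 := by
          obtain ⟨x, hx⟩ := haod; obtain ⟨y, hy⟩ := hbodd
          have h1 : a ^ 2 = 4 * (x ^ 2 + x) + 1 := by subst hx; ring
          have h2 : b ^ 2 = 4 * (y ^ 2 + y) + 1 := by subst hy; ring
          omega
        obtain ⟨u, hu⟩ : ∃ u, a ^ 2 = b ^ 2 + 2 * u := ⟨(a ^ 2 - b ^ 2) / 2, by omega⟩
        have hupos : 0 < u := by omega
        have hcsq : c ^ 2 = 4 * (u * (b ^ 2 + u)) := by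
          have h5 : (b ^ 2 + 2 * u) ^ 2 = b ^ 4 + 4 * (u * (b ^ 2 + u)) := by ring
          have h4 : a ^ 4 = (a ^ 2) ^ 2 := by ring
          rw [hu] at h4
          omega
        have hceven : 2 ∣ c := by
          have h6 : 2 ^ 2 ∣ c ^ 2 := ⟨u * (b ^ 2 + u), by omega⟩
          exact (Nat.pow_dvd_pow_iff (by norm_num)).mp h6
        obtain ⟨c₁, hc₁⟩ := hceven
        have huv : u * (b ^ 2 + u) = c₁ ^ 2 := by
          have h7 : c ^ 2 = 4 * c₁ ^ 2 := by rw [hc₁]; ring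
          omega
        have hcouv : Nat.Coprime u (b ^ 2 + u) := by
          have hd1 : Nat.gcd u (b ^ 2 + u) ∣ u := Nat.gcd_dvd_left _ _
          have hdb : Nat.gcd u (b ^ 2 + u) ∣ b ^ 2 :=
            (Nat.dvd_add_iff_left hd1).mpr (Nat.gcd_dvd_right _ _)
          have hda : Nat.gcd u (b ^ 2 + u) ∣ a ^ 2 := by
            rw [hu]; exact Nat.dvd_add hdb (Dvd.dvd.mul_left hd1 2)
          have h3 := Nat.dvd_gcd hda hdb
          rw [hcosq] at h3
          exact Nat.dvd_one.mp h3
        obtain ⟨e, he⟩ := nsq hcouv huv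
        obtain ⟨f, hf⟩ := nsq hcouv.symm (by rw [mul_comm]; exact huv)
        have hfa : f < a := by
          have h1 : f ^ 2 < a ^ 2 := by rw [← hf]; omega
          exact lt_of_pow_lt_pow_left₀ 2 (Nat.zero_le a) h1
        have hepos : 0 < e := pos_of_sq hupos he
        refine IH f hfa e (a * b) hepos (Nat.mul_pos ha hb) ?_
        have h6 : (b ^ 2 + u) ^ 2 = (a * b) ^ 2 + u ^ 2 := by rw [mul_pow, hu]; ring
        calc f ^ 4 = (f ^ 2) ^ 2 := by ring
          _ = (b ^ 2 + u) ^ 2 := by rw [← hf]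
          _ = (a * b) ^ 2 + u ^ 2 := h6
          _ = e ^ 4 + (a * b) ^ 2 := by rw [he]; ring
  · -- non-coprime: divide out gcd
    set g := Nat.gcd a b with hgdef
    have hgpos : 0 < g := Nat.gcd_pos_of_pos_left b ha
    have hg2 : 2 ≤ g := by omega
    obtain ⟨a₁, ha₁⟩ : g ∣ a := Nat.gcd_dvd_left _ _
    obtain ⟨b₁, hb₁⟩ : g ∣ b := Nat.gcd_dvd_right _ _
    have hdc : g ^ 4 ∣ c ^ 2 := by
      have h1 : g ^ 4 ∣ a ^ 4 := ⟨a₁ ^ 4, by rw [ha₁]; ring⟩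
      have h2 : g ^ 4 ∣ b ^ 4 := ⟨b₁ ^ 4, by rw [hb₁]; ring⟩
      have h3 : c ^ 2 = a ^ 4 - b ^ 4 := by omega
      rw [h3]; exact Nat.dvd_sub h1 h2
    have hdc2 : g ^ 2 ∣ c := by
      have h4 : (g ^ 2) ^ 2 ∣ c ^ 2 := by
        have h : (g ^ 2) ^ 2 = g ^ 4 := by ring
        rw [h]; exact hdc
      exact (Nat.pow_dvd_pow_iff (by norm_num)).mp h4
    obtain ⟨c₁, hc₁⟩ := hdc2
    have heq' : a₁ ^ 4 = b₁ ^ 4 + c₁ ^ 2 := by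
      have h : g ^ 4 * a₁ ^ 4 = g ^ 4 * (b₁ ^ 4 + c₁ ^ 2) := by
        have e1 : a ^ 4 = g ^ 4 * a₁ ^ 4 := by rw [ha₁]; ring
        have e2 : b ^ 4 = g ^ 4 * b₁ ^ 4 := by rw [hb₁]; ring
        have e3 : c ^ 2 = g ^ 4 * c₁ ^ 2 := by rw [hc₁]; ring
        rw [← e1, Nat.mul_add, ← e2, ← e3]; exact heq
      exact Nat.eq_of_mul_eq_mul_left (by positivity) h
    have ha₁pos : 0 < a₁ := by
      rcases Nat.eq_zero_or_pos a₁ with h | h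
      · rw [h, mul_zero] at ha₁; omega
      · exact h
    have hb₁pos : 0 < b₁ := by
      rcases Nat.eq_zero_or_pos b₁ with h | h
      · rw [h, mul_zero] at hb₁; omega
      · exact h
    have hc₁pos : 0 < c₁ := by
      rcases Nat.eq_zero_or_pos c₁ with h | h
      · rw [h, mul_zero] at hc₁; omega
      · exact h
    have ha₁lt : a₁ < a := by
      rw [ha₁]
      exact (Nat.lt_mul_iff_one_lt_left ha₁pos).mpr hg2
    exact IH a₁ ha₁lt b₁ c₁ hb₁pos hc₁pos heq'



lemma sq_inj {x y : ℕ} (h : x ^ 2 = y ^ 2) : x = y :=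
  Nat.pow_left_injective (by norm_num) h

lemma no_chain (x p q r : ℕ) (hx : 0 < x) (hp : 0 < p) (hr : 0 < r)
    (h1 : x ^ 2 + p ^ 2 = q ^ 2) (h2 : x ^ 2 + q ^ 2 = r ^ 2) : False := by
  apply fermat_diff q x (p * r) hx (Nat.mul_pos hp hr)
  have e3 : r ^ 2 = 2 * x ^ 2 + p ^ 2 := by omega
  calc q ^ 4 = (q ^ 2) ^ 2 := by ring
    _ = (x ^ 2 + p ^ 2) ^ 2 := by rw [h1]
    _ = x ^ 4 + p ^ 2 * (2 * x ^ 2 + p ^ 2) := by ring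
    _ = x ^ 4 + p ^ 2 * r ^ 2 := by rw [e3]
    _ = x ^ 4 + (p * r) ^ 2 := by ring

set_option maxHeartbeats 4000000 in
/-- The Pythagorean triple system is linear: two distinct Pythagorean triples intersect
in at most one point. That is, if `{a,b,c}` and `{a',b',c'}` are sets of distinct
positive integers with `a² + b² = c²` and `a'² + b'² = c'²` sharing at least two
elements, then they are equal. -/
theorem pyth_is_linear (a b c a' b' c' : ℕ)
    (ha : 0 < a) (hb : 0 < b) (hc : 0 < c)
    (ha' : 0 < a') (hb' : 0 < b') (hc' : 0 < c')
    (hab : a ≠ b) (hac : a ≠ c) (hbc : b ≠ c)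
    (hab' : a' ≠ b') (hac' : a' ≠ c') (hbc' : b' ≠ c')
    (heq : a ^ 2 + b ^ 2 = c ^ 2) (heq' : a' ^ 2 + b' ^ 2 = c' ^ 2)
    (hshare : 2 ≤ (({a, b, c} : Finset ℕ) ∩ ({a', b', c'} : Finset ℕ)).card) :
    ({a, b, c} : Finset ℕ) = ({a', b', c'} : Finset ℕ) := by
  have hltac : a < c := by
    have h0 : 0 < b ^ 2 := by positivity
    have h1 : a ^ 2 < c ^ 2 := by omega
    exact lt_of_pow_lt_pow_left₀ 2 (Nat.zero_le c) h1
  have hltbc : b < c := by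
    have h0 : 0 < a ^ 2 := by positivity
    have h1 : b ^ 2 < c ^ 2 := by omega
    exact lt_of_pow_lt_pow_left₀ 2 (Nat.zero_le c) h1
  have hltac' : a' < c' := by
    have h0 : 0 < b' ^ 2 := by positivity
    have h1 : a' ^ 2 < c' ^ 2 := by omega
    exact lt_of_pow_lt_pow_left₀ 2 (Nat.zero_le c') h1
  have hltbc' : b' < c' := by
    have h0 : 0 < a' ^ 2 := by positivity
    have h1 : b' ^ 2 < c' ^ 2 := by omega
    exact lt_of_pow_lt_pow_left₀ 2 (Nat.zero_le c') h1
  obtain ⟨x, hx, y, hy, hxy⟩ := Finset.one_lt_card.mp (by omega :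
    1 < (({a, b, c} : Finset ℕ) ∩ ({a', b', c'} : Finset ℕ)).card)
  simp only [Finset.mem_inter, Finset.mem_insert, Finset.mem_singleton] at hx hy
  obtain ⟨hx1 | hx1 | hx1, hx2 | hx2 | hx2⟩ := hx <;>
    obtain ⟨hy1 | hy1 | hy1, hy2 | hy2 | hy2⟩ := hy <;>
    first
    | omega
    | (rw [hx1] at hx2
       rw [hy1] at hy2
       rw [← hx2] at heq'
       try rw [← hy2] at heq'
       first
       | exact (no_chain a b' b c ha hb' hc heq' heq).elim
       | exact (no_chain b b' a c hb hb' hc heq' (by linarith)).elim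
       | exact (no_chain a a' b c ha ha' hc (by linarith) heq).elim
       | exact (no_chain b a' a c hb ha' hc (by linarith) (by linarith)).elim
       | exact (no_chain a b c c' ha hb hc' heq heq').elim
       | exact (no_chain a b c c' ha hb hc' heq (by linarith)).elim
       | exact (no_chain b a c c' hb ha hc' (by linarith) heq').elim
       | exact (no_chain b a c c' hb ha hc' (by linarith) (by linarith)).elim
       | (have h3 : c = c' := sq_inj (by linarith)
          ext t; simp only [Finset.mem_insert, Finset.mem_singleton]; omega)
       | (have h3 : b = b' := sq_inj (by linarith)
          ext t; simp only [Finset.mem_insert, Finset.mem_singleton]; omega)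
       | (have h3 : b = a' := sq_inj (by linarith)
          ext t; simp only [Finset.mem_insert, Finset.mem_singleton]; omega)
       | (have h3 : a = b' := sq_inj (by linarith)
          ext t; simp only [Finset.mem_insert, Finset.mem_singleton]; omega)
       | (have h3 : a = a' := sq_inj (by linarith)
          ext t; simp only [Finset.mem_insert, Finset.mem_singleton]; omega))
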